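/- For every integer n ≥ 3, define permutations of {1,…,8n} by σ₀ = (4n−3, 4)(4n−2, 8n−2)(3, 8n−1)(4n+1, 8n) · ∏_{i=0}^{n−2} (4i+1, 4i+8)(4i+2, 4n+4i+2)(4i+7, 4n+4i+3)(4n+4i+4, 4n+4i+5), and σ₁ = the product of the 2n 4-cycles (4i+1, 4i+2, 4i+3, 4i+4) for i = 0,…,2n−1. Then σ₀ is a fixed-point-free involution on {1,…,8n}, σ₁⁴ = 1, and the subgroup generated by σ₀ and σ₁ acts transitively on {1,…,8n}. -/

import Mathlib

set_option maxHeartbeats 1000000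

private lemma prod_fix (F : ℕ → Equiv.Perm ℕ) (m x : ℕ) (h : ∀ i < m, F i x = x) :
    ((List.range m).map F).prod x = x := by
  induction m with
  | zero => simp
  | succ k ih =>
    rw [List.range_succ, List.map_append, List.prod_append]
    simp only [List.map_cons, List.map_nil, List.prod_cons, List.prod_nil, mul_one,
      Equiv.Perm.mul_apply]
    rw [h k (by omega)]
    exact ih (fun i hi => h i (by omega))

private lemma prod_single (F : ℕ → Equiv.Perm ℕ) (m j x y : ℕ) (hj : j < m)
    (hx : ∀ i < m, i ≠ j → F i x = x) (hxy : F j x = y)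
    (hy : ∀ i < j, F i y = y) :
    ((List.range m).map F).prod x = y := by
  induction m with
  | zero => omega
  | succ k ih =>
    rw [List.range_succ, List.map_append, List.prod_append]
    simp only [List.map_cons, List.map_nil, List.prod_cons, List.prod_nil, mul_one,
      Equiv.Perm.mul_apply]
    rcases eq_or_ne k j with rfl | hkj
    · rw [hxy]; exact prod_fix F k y hy
    · rw [hx k (by omega) hkj]
      exact ih (by omega) (fun i hi hij => hx i (by omega) hij)

private lemma swap_spec (a b z w : ℕ)
    (h : (z = a ∧ w = b) ∨ (z = b ∧ w = a) ∨ (z ≠ a ∧ z ≠ b ∧ w = z)) :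
    Equiv.swap a b z = w := by
  rw [Equiv.swap_apply_def]
  split_ifs <;> omega

private lemma formPerm_block (i z w : ℕ)
    (h : (z = 4*i+1 ∧ w = 4*i+2) ∨ (z = 4*i+2 ∧ w = 4*i+3) ∨ (z = 4*i+3 ∧ w = 4*i+4) ∨
         (z = 4*i+4 ∧ w = 4*i+1) ∨ ((z < 4*i+1 ∨ 4*i+4 < z) ∧ w = z)) :
    ([4*i+1, 4*i+2, 4*i+3, 4*i+4] : List ℕ).formPerm z = w := by
  simp only [List.formPerm_cons_cons, List.formPerm_singleton, mul_one, Equiv.Perm.mul_apply,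
    Equiv.swap_apply_def]
  split_ifs <;> omega

private lemma quad_fix (n i z : ℕ)
    (h1 : z ≠ 4*i+1) (h2 : z ≠ 4*i+8) (h3 : z ≠ 4*i+2) (h4 : z ≠ 4*n+4*i+2)
    (h5 : z ≠ 4*i+7) (h6 : z ≠ 4*n+4*i+3) (h7 : z ≠ 4*n+4*i+4) (h8 : z ≠ 4*n+4*i+5) :
    (Equiv.swap (4*i+1) (4*i+8) * Equiv.swap (4*i+2) (4*n+4*i+2) *
     Equiv.swap (4*i+7) (4*n+4*i+3) * Equiv.swap (4*n+4*i+4) (4*n+4*i+5)) z = z := by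
  simp only [Equiv.Perm.mul_apply]
  rw [Equiv.swap_apply_of_ne_of_ne h7 h8, Equiv.swap_apply_of_ne_of_ne h5 h6,
    Equiv.swap_apply_of_ne_of_ne h3 h4, Equiv.swap_apply_of_ne_of_ne h1 h2]

private lemma quadA (n i : ℕ) (hn : 3 ≤ n) :
    (Equiv.swap (4*i+1) (4*i+8) * Equiv.swap (4*i+2) (4*n+4*i+2) *
     Equiv.swap (4*i+7) (4*n+4*i+3) * Equiv.swap (4*n+4*i+4) (4*n+4*i+5)) (4*i+1) = 4*i+8 := by
  simp only [Equiv.Perm.mul_apply]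
  rw [Equiv.swap_apply_of_ne_of_ne (show (4*i+1:ℕ) ≠ 4*n+4*i+4 by omega) (show (4*i+1:ℕ) ≠ 4*n+4*i+5 by omega),
    Equiv.swap_apply_of_ne_of_ne (show (4*i+1:ℕ) ≠ 4*i+7 by omega) (show (4*i+1:ℕ) ≠ 4*n+4*i+3 by omega),
    Equiv.swap_apply_of_ne_of_ne (show (4*i+1:ℕ) ≠ 4*i+2 by omega) (show (4*i+1:ℕ) ≠ 4*n+4*i+2 by omega),
    Equiv.swap_apply_left (4*i+1) (4*i+8)]

private lemma quadB (n i : ℕ) (hn : 3 ≤ n) :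
    (Equiv.swap (4*i+1) (4*i+8) * Equiv.swap (4*i+2) (4*n+4*i+2) *
     Equiv.swap (4*i+7) (4*n+4*i+3) * Equiv.swap (4*n+4*i+4) (4*n+4*i+5)) (4*i+8) = 4*i+1 := by
  simp only [Equiv.Perm.mul_apply]
  rw [Equiv.swap_apply_of_ne_of_ne (show (4*i+8:ℕ) ≠ 4*n+4*i+4 by omega) (show (4*i+8:ℕ) ≠ 4*n+4*i+5 by omega),
    Equiv.swap_apply_of_ne_of_ne (show (4*i+8:ℕ) ≠ 4*i+7 by omega) (show (4*i+8:ℕ) ≠ 4*n+4*i+3 by omega),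
    Equiv.swap_apply_of_ne_of_ne (show (4*i+8:ℕ) ≠ 4*i+2 by omega) (show (4*i+8:ℕ) ≠ 4*n+4*i+2 by omega),
    Equiv.swap_apply_right (4*i+1) (4*i+8)]

private lemma quadC (n i : ℕ) (hn : 3 ≤ n) :
    (Equiv.swap (4*i+1) (4*i+8) * Equiv.swap (4*i+2) (4*n+4*i+2) *
     Equiv.swap (4*i+7) (4*n+4*i+3) * Equiv.swap (4*n+4*i+4) (4*n+4*i+5)) (4*i+2) = 4*n+4*i+2 := by
  simp only [Equiv.Perm.mul_apply]
  rw [Equiv.swap_apply_of_ne_of_ne (show (4*i+2:ℕ) ≠ 4*n+4*i+4 by omega) (show (4*i+2:ℕ) ≠ 4*n+4*i+5 by omega),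
    Equiv.swap_apply_of_ne_of_ne (show (4*i+2:ℕ) ≠ 4*i+7 by omega) (show (4*i+2:ℕ) ≠ 4*n+4*i+3 by omega),
    Equiv.swap_apply_left (4*i+2) (4*n+4*i+2),
    Equiv.swap_apply_of_ne_of_ne (show (4*n+4*i+2:ℕ) ≠ 4*i+1 by omega) (show (4*n+4*i+2:ℕ) ≠ 4*i+8 by omega)]

private lemma quadD (n i : ℕ) (hn : 3 ≤ n) :
    (Equiv.swap (4*i+1) (4*i+8) * Equiv.swap (4*i+2) (4*n+4*i+2) *
     Equiv.swap (4*i+7) (4*n+4*i+3) * Equiv.swap (4*n+4*i+4) (4*n+4*i+5)) (4*n+4*i+2) = 4*i+2 := by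
  simp only [Equiv.Perm.mul_apply]
  rw [Equiv.swap_apply_of_ne_of_ne (show (4*n+4*i+2:ℕ) ≠ 4*n+4*i+4 by omega) (show (4*n+4*i+2:ℕ) ≠ 4*n+4*i+5 by omega),
    Equiv.swap_apply_of_ne_of_ne (show (4*n+4*i+2:ℕ) ≠ 4*i+7 by omega) (show (4*n+4*i+2:ℕ) ≠ 4*n+4*i+3 by omega),
    Equiv.swap_apply_right (4*i+2) (4*n+4*i+2),
    Equiv.swap_apply_of_ne_of_ne (show (4*i+2:ℕ) ≠ 4*i+1 by omega) (show (4*i+2:ℕ) ≠ 4*i+8 by omega)]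

private lemma quadE (n i : ℕ) (hn : 3 ≤ n) :
    (Equiv.swap (4*i+1) (4*i+8) * Equiv.swap (4*i+2) (4*n+4*i+2) *
     Equiv.swap (4*i+7) (4*n+4*i+3) * Equiv.swap (4*n+4*i+4) (4*n+4*i+5)) (4*i+7) = 4*n+4*i+3 := by
  simp only [Equiv.Perm.mul_apply]
  rw [Equiv.swap_apply_of_ne_of_ne (show (4*i+7:ℕ) ≠ 4*n+4*i+4 by omega) (show (4*i+7:ℕ) ≠ 4*n+4*i+5 by omega),
    Equiv.swap_apply_left (4*i+7) (4*n+4*i+3),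
    Equiv.swap_apply_of_ne_of_ne (show (4*n+4*i+3:ℕ) ≠ 4*i+2 by omega) (show (4*n+4*i+3:ℕ) ≠ 4*n+4*i+2 by omega),
    Equiv.swap_apply_of_ne_of_ne (show (4*n+4*i+3:ℕ) ≠ 4*i+1 by omega) (show (4*n+4*i+3:ℕ) ≠ 4*i+8 by omega)]

private lemma quadF (n i : ℕ) (hn : 3 ≤ n) :
    (Equiv.swap (4*i+1) (4*i+8) * Equiv.swap (4*i+2) (4*n+4*i+2) *
     Equiv.swap (4*i+7) (4*n+4*i+3) * Equiv.swap (4*n+4*i+4) (4*n+4*i+5)) (4*n+4*i+3) = 4*i+7 := by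
  simp only [Equiv.Perm.mul_apply]
  rw [Equiv.swap_apply_of_ne_of_ne (show (4*n+4*i+3:ℕ) ≠ 4*n+4*i+4 by omega) (show (4*n+4*i+3:ℕ) ≠ 4*n+4*i+5 by omega),
    Equiv.swap_apply_right (4*i+7) (4*n+4*i+3),
    Equiv.swap_apply_of_ne_of_ne (show (4*i+7:ℕ) ≠ 4*i+2 by omega) (show (4*i+7:ℕ) ≠ 4*n+4*i+2 by omega),
    Equiv.swap_apply_of_ne_of_ne (show (4*i+7:ℕ) ≠ 4*i+1 by omega) (show (4*i+7:ℕ) ≠ 4*i+8 by omega)]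

private lemma quadG (n i : ℕ) (hn : 3 ≤ n) :
    (Equiv.swap (4*i+1) (4*i+8) * Equiv.swap (4*i+2) (4*n+4*i+2) *
     Equiv.swap (4*i+7) (4*n+4*i+3) * Equiv.swap (4*n+4*i+4) (4*n+4*i+5)) (4*n+4*i+4) = 4*n+4*i+5 := by
  simp only [Equiv.Perm.mul_apply]
  rw [Equiv.swap_apply_left (4*n+4*i+4) (4*n+4*i+5),
    Equiv.swap_apply_of_ne_of_ne (show (4*n+4*i+5:ℕ) ≠ 4*i+7 by omega) (show (4*n+4*i+5:ℕ) ≠ 4*n+4*i+3 by omega),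
    Equiv.swap_apply_of_ne_of_ne (show (4*n+4*i+5:ℕ) ≠ 4*i+2 by omega) (show (4*n+4*i+5:ℕ) ≠ 4*n+4*i+2 by omega),
    Equiv.swap_apply_of_ne_of_ne (show (4*n+4*i+5:ℕ) ≠ 4*i+1 by omega) (show (4*n+4*i+5:ℕ) ≠ 4*i+8 by omega)]

private lemma quadH (n i : ℕ) (hn : 3 ≤ n) :
    (Equiv.swap (4*i+1) (4*i+8) * Equiv.swap (4*i+2) (4*n+4*i+2) *
     Equiv.swap (4*i+7) (4*n+4*i+3) * Equiv.swap (4*n+4*i+4) (4*n+4*i+5)) (4*n+4*i+5) = 4*n+4*i+4 := by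
  simp only [Equiv.Perm.mul_apply]
  rw [Equiv.swap_apply_right (4*n+4*i+4) (4*n+4*i+5),
    Equiv.swap_apply_of_ne_of_ne (show (4*n+4*i+4:ℕ) ≠ 4*i+7 by omega) (show (4*n+4*i+4:ℕ) ≠ 4*n+4*i+3 by omega),
    Equiv.swap_apply_of_ne_of_ne (show (4*n+4*i+4:ℕ) ≠ 4*i+2 by omega) (show (4*n+4*i+4:ℕ) ≠ 4*n+4*i+2 by omega),
    Equiv.swap_apply_of_ne_of_ne (show (4*n+4*i+4:ℕ) ≠ 4*i+1 by omega) (show (4*n+4*i+4:ℕ) ≠ 4*i+8 by omega)]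
/-- For every integer `n ≥ 3`, the permutations
`σ₀ = (4n−3,4)(4n−2,8n−2)(3,8n−1)(4n+1,8n) ·
  ∏_{i=0}^{n−2} (4i+1,4i+8)(4i+2,4n+4i+2)(4i+7,4n+4i+3)(4n+4i+4,4n+4i+5)`
and `σ₁ = ∏_{i=0}^{2n−1} (4i+1,4i+2,4i+3,4i+4)` of the `n`-antiprism satisfy: `σ₀` is a
fixed-point-free involution on `{1,…,8n}`, `σ₁⁴ = 1`, and the subgroup generated by `σ₀`
and `σ₁` acts transitively on `{1,…,8n}`. -/
theorem n_antiprism_permutation_representation (n : ℕ) (hn : 3 ≤ n) (σ₀ σ₁ : Equiv.Perm ℕ)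
    (hσ₀ : σ₀ = Equiv.swap (4 * n - 3) 4 * Equiv.swap (4 * n - 2) (8 * n - 2) *
      Equiv.swap 3 (8 * n - 1) * Equiv.swap (4 * n + 1) (8 * n) *
      ((List.range (n - 1)).map (fun i =>
        Equiv.swap (4 * i + 1) (4 * i + 8) * Equiv.swap (4 * i + 2) (4 * n + 4 * i + 2) *
        Equiv.swap (4 * i + 7) (4 * n + 4 * i + 3) *
        Equiv.swap (4 * n + 4 * i + 4) (4 * n + 4 * i + 5))).prod)
    (hσ₁ : σ₁ = ((List.range (2 * n)).map (fun i =>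
      ([4 * i + 1, 4 * i + 2, 4 * i + 3, 4 * i + 4] : List ℕ).formPerm)).prod) :
    σ₀ * σ₀ = 1 ∧ (∀ x ∈ Finset.Icc 1 (8 * n), σ₀ x ≠ x) ∧ σ₁ ^ 4 = 1 ∧
    ∀ a ∈ Finset.Icc 1 (8 * n), ∀ b ∈ Finset.Icc 1 (8 * n),
      ∃ g ∈ Subgroup.closure ({σ₀, σ₁} : Set (Equiv.Perm ℕ)), g a = b := by
  have hs1 : ∀ x : ℕ,
      (1 ≤ x ∧ x ≤ 8*n ∧ x % 4 = 0 ∧ σ₁ x = x - 3) ∨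
      (1 ≤ x ∧ x ≤ 8*n ∧ x % 4 ≠ 0 ∧ σ₁ x = x + 1) ∨
      ((x = 0 ∨ 8*n < x) ∧ σ₁ x = x) := by
    intro x
    by_cases hr : 1 ≤ x ∧ x ≤ 8*n
    · obtain ⟨j, hj, hc⟩ : ∃ j, j < 2*n ∧ (x = 4*j+1 ∨ x = 4*j+2 ∨ x = 4*j+3 ∨ x = 4*j+4) :=
        ⟨(x-1)/4, by omega, by omega⟩
      rcases hc with rfl | rfl | rfl | rfl <;>
      [ (have hval : σ₁ (4*j+1) = 4*j+2 := by
          rw [hσ₁]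
          exact prod_single _ (2*n) j _ _ hj
            (fun i hi hij => formPerm_block i _ _ (by omega))
            (formPerm_block j _ _ (by omega))
            (fun i hi => formPerm_block i _ _ (by omega)));
        (have hval : σ₁ (4*j+2) = 4*j+3 := by
          rw [hσ₁]
          exact prod_single _ (2*n) j _ _ hj
            (fun i hi hij => formPerm_block i _ _ (by omega))
            (formPerm_block j _ _ (by omega))
            (fun i hi => formPerm_block i _ _ (by omega)));
        (have hval : σ₁ (4*j+3) = 4*j+4 := by
          rw [hσ₁]
          exact prod_single _ (2*n) j _ _ hj
            (fun i hi hij => formPerm_block i _ _ (by omega))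
            (formPerm_block j _ _ (by omega))
            (fun i hi => formPerm_block i _ _ (by omega)));
        (have hval : σ₁ (4*j+4) = 4*j+1 := by
          rw [hσ₁]
          exact prod_single _ (2*n) j _ _ hj
            (fun i hi hij => formPerm_block i _ _ (by omega))
            (formPerm_block j _ _ (by omega))
            (fun i hi => formPerm_block i _ _ (by omega)))] <;>
      omega
    · have hval : σ₁ x = x := by
        rw [hσ₁]
        exact prod_fix _ (2*n) x (fun i hi => formPerm_block i _ _ (by omega))
      omega
  have hs0 : ∀ x : ℕ,
      (x = 4*n-3 ∧ σ₀ x = 4) ∨ (x = 4 ∧ σ₀ x = 4*n-3) ∨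
      (x = 4*n-2 ∧ σ₀ x = 8*n-2) ∨ (x = 8*n-2 ∧ σ₀ x = 4*n-2) ∨
      (x = 3 ∧ σ₀ x = 8*n-1) ∨ (x = 8*n-1 ∧ σ₀ x = 3) ∨
      (x = 4*n+1 ∧ σ₀ x = 8*n) ∨ (x = 8*n ∧ σ₀ x = 4*n+1) ∨
      (x % 4 = 1 ∧ 1 ≤ x ∧ x ≤ 4*n-7 ∧ σ₀ x = x+7) ∨
      (x % 4 = 0 ∧ 8 ≤ x ∧ x ≤ 4*n ∧ σ₀ x = x-7) ∨
      (x % 4 = 2 ∧ 2 ≤ x ∧ x ≤ 4*n-6 ∧ σ₀ x = x+4*n) ∨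
      (x % 4 = 2 ∧ 4*n+2 ≤ x ∧ x ≤ 8*n-6 ∧ σ₀ x = x-4*n) ∨
      (x % 4 = 3 ∧ 7 ≤ x ∧ x ≤ 4*n-1 ∧ σ₀ x = x+4*n-4) ∨
      (x % 4 = 3 ∧ 4*n+3 ≤ x ∧ x ≤ 8*n-5 ∧ σ₀ x = x-4*n+4) ∨
      (x % 4 = 0 ∧ 4*n+4 ≤ x ∧ x ≤ 8*n-4 ∧ σ₀ x = x+1) ∨
      (x % 4 = 1 ∧ 4*n+5 ≤ x ∧ x ≤ 8*n-3 ∧ σ₀ x = x-1) ∨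
      ((x = 0 ∨ 8*n < x) ∧ σ₀ x = x) := by
    intro x
    by_cases hout : x = 0 ∨ 8*n < x
    · have hval : σ₀ x = x := by
        rw [hσ₀]; simp only [Equiv.Perm.mul_apply]
        rw [prod_fix (fun i => Equiv.swap (4 * i + 1) (4 * i + 8) * Equiv.swap (4 * i + 2) (4 * n + 4 * i + 2) * Equiv.swap (4 * i + 7) (4 * n + 4 * i + 3) * Equiv.swap (4 * n + 4 * i + 4) (4 * n + 4 * i + 5)) (n-1) (x) (fun i hi => quad_fix n i (x) (by omega) (by omega) (by omega) (by omega) (by omega) (by omega) (by omega) (by omega)),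
          swap_spec (4*n+1) (8*n) (x) (x) (by omega),
          swap_spec 3 (8*n-1) (x) (x) (by omega),
          swap_spec (4*n-2) (8*n-2) (x) (x) (by omega),
          swap_spec (4*n-3) 4 (x) (x) (by omega)]
      exact Or.inr (Or.inr (Or.inr (Or.inr (Or.inr (Or.inr (Or.inr (Or.inr (Or.inr (Or.inr (Or.inr (Or.inr (Or.inr (Or.inr (Or.inr (Or.inr (⟨hout, hval⟩))))))))))))))))
    by_cases h1 : x = 4*n-3
    · subst h1
      have hval : σ₀ (4*n-3) = 4 := by
        rw [hσ₀]; simp only [Equiv.Perm.mul_apply]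
        rw [prod_fix (fun i => Equiv.swap (4 * i + 1) (4 * i + 8) * Equiv.swap (4 * i + 2) (4 * n + 4 * i + 2) * Equiv.swap (4 * i + 7) (4 * n + 4 * i + 3) * Equiv.swap (4 * n + 4 * i + 4) (4 * n + 4 * i + 5)) (n-1) (4*n-3) (fun i hi => quad_fix n i (4*n-3) (by omega) (by omega) (by omega) (by omega) (by omega) (by omega) (by omega) (by omega)),
          swap_spec (4*n+1) (8*n) (4*n-3) (4*n-3) (by omega),
          swap_spec 3 (8*n-1) (4*n-3) (4*n-3) (by omega),
          swap_spec (4*n-2) (8*n-2) (4*n-3) (4*n-3) (by omega),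
          swap_spec (4*n-3) 4 (4*n-3) (4) (by omega)]
      exact Or.inl ⟨rfl, hval⟩
    by_cases h2 : x = 4
    · subst h2
      have hval : σ₀ (4) = 4*n-3 := by
        rw [hσ₀]; simp only [Equiv.Perm.mul_apply]
        rw [prod_fix (fun i => Equiv.swap (4 * i + 1) (4 * i + 8) * Equiv.swap (4 * i + 2) (4 * n + 4 * i + 2) * Equiv.swap (4 * i + 7) (4 * n + 4 * i + 3) * Equiv.swap (4 * n + 4 * i + 4) (4 * n + 4 * i + 5)) (n-1) (4) (fun i hi => quad_fix n i (4) (by omega) (by omega) (by omega) (by omega) (by omega) (by omega) (by omega) (by omega)),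
          swap_spec (4*n+1) (8*n) (4) (4) (by omega),
          swap_spec 3 (8*n-1) (4) (4) (by omega),
          swap_spec (4*n-2) (8*n-2) (4) (4) (by omega),
          swap_spec (4*n-3) 4 (4) (4*n-3) (by omega)]
      exact Or.inr (Or.inl ⟨rfl, hval⟩)
    by_cases h3 : x = 4*n-2
    · subst h3
      have hval : σ₀ (4*n-2) = 8*n-2 := by
        rw [hσ₀]; simp only [Equiv.Perm.mul_apply]
        rw [prod_fix (fun i => Equiv.swap (4 * i + 1) (4 * i + 8) * Equiv.swap (4 * i + 2) (4 * n + 4 * i + 2) * Equiv.swap (4 * i + 7) (4 * n + 4 * i + 3) * Equiv.swap (4 * n + 4 * i + 4) (4 * n + 4 * i + 5)) (n-1) (4*n-2) (fun i hi => quad_fix n i (4*n-2) (by omega) (by omega) (by omega) (by omega) (by omega) (by omega) (by omega) (by omega)),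
          swap_spec (4*n+1) (8*n) (4*n-2) (4*n-2) (by omega),
          swap_spec 3 (8*n-1) (4*n-2) (4*n-2) (by omega),
          swap_spec (4*n-2) (8*n-2) (4*n-2) (8*n-2) (by omega),
          swap_spec (4*n-3) 4 (8*n-2) (8*n-2) (by omega)]
      exact Or.inr (Or.inr (Or.inl ⟨rfl, hval⟩))
    by_cases h4 : x = 8*n-2
    · subst h4
      have hval : σ₀ (8*n-2) = 4*n-2 := by
        rw [hσ₀]; simp only [Equiv.Perm.mul_apply]
        rw [prod_fix (fun i => Equiv.swap (4 * i + 1) (4 * i + 8) * Equiv.swap (4 * i + 2) (4 * n + 4 * i + 2) * Equiv.swap (4 * i + 7) (4 * n + 4 * i + 3) * Equiv.swap (4 * n + 4 * i + 4) (4 * n + 4 * i + 5)) (n-1) (8*n-2) (fun i hi => quad_fix n i (8*n-2) (by omega) (by omega) (by omega) (by omega) (by omega) (by omega) (by omega) (by omega)),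
          swap_spec (4*n+1) (8*n) (8*n-2) (8*n-2) (by omega),
          swap_spec 3 (8*n-1) (8*n-2) (8*n-2) (by omega),
          swap_spec (4*n-2) (8*n-2) (8*n-2) (4*n-2) (by omega),
          swap_spec (4*n-3) 4 (4*n-2) (4*n-2) (by omega)]
      exact Or.inr (Or.inr (Or.inr (Or.inl ⟨rfl, hval⟩)))
    by_cases h5 : x = 3
    · subst h5
      have hval : σ₀ (3) = 8*n-1 := by
        rw [hσ₀]; simp only [Equiv.Perm.mul_apply]
        rw [prod_fix (fun i => Equiv.swap (4 * i + 1) (4 * i + 8) * Equiv.swap (4 * i + 2) (4 * n + 4 * i + 2) * Equiv.swap (4 * i + 7) (4 * n + 4 * i + 3) * Equiv.swap (4 * n + 4 * i + 4) (4 * n + 4 * i + 5)) (n-1) (3) (fun i hi => quad_fix n i (3) (by omega) (by omega) (by omega) (by omega) (by omega) (by omega) (by omega) (by omega)),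
          swap_spec (4*n+1) (8*n) (3) (3) (by omega),
          swap_spec 3 (8*n-1) (3) (8*n-1) (by omega),
          swap_spec (4*n-2) (8*n-2) (8*n-1) (8*n-1) (by omega),
          swap_spec (4*n-3) 4 (8*n-1) (8*n-1) (by omega)]
      exact Or.inr (Or.inr (Or.inr (Or.inr (Or.inl ⟨rfl, hval⟩))))
    by_cases h6 : x = 8*n-1
    · subst h6
      have hval : σ₀ (8*n-1) = 3 := by
        rw [hσ₀]; simp only [Equiv.Perm.mul_apply]
        rw [prod_fix (fun i => Equiv.swap (4 * i + 1) (4 * i + 8) * Equiv.swap (4 * i + 2) (4 * n + 4 * i + 2) * Equiv.swap (4 * i + 7) (4 * n + 4 * i + 3) * Equiv.swap (4 * n + 4 * i + 4) (4 * n + 4 * i + 5)) (n-1) (8*n-1) (fun i hi => quad_fix n i (8*n-1) (by omega) (by omega) (by omega) (by omega) (by omega) (by omega) (by omega) (by omega)),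
          swap_spec (4*n+1) (8*n) (8*n-1) (8*n-1) (by omega),
          swap_spec 3 (8*n-1) (8*n-1) (3) (by omega),
          swap_spec (4*n-2) (8*n-2) (3) (3) (by omega),
          swap_spec (4*n-3) 4 (3) (3) (by omega)]
      exact Or.inr (Or.inr (Or.inr (Or.inr (Or.inr (Or.inl ⟨rfl, hval⟩)))))
    by_cases h7 : x = 4*n+1
    · subst h7
      have hval : σ₀ (4*n+1) = 8*n := by
        rw [hσ₀]; simp only [Equiv.Perm.mul_apply]
        rw [prod_fix (fun i => Equiv.swap (4 * i + 1) (4 * i + 8) * Equiv.swap (4 * i + 2) (4 * n + 4 * i + 2) * Equiv.swap (4 * i + 7) (4 * n + 4 * i + 3) * Equiv.swap (4 * n + 4 * i + 4) (4 * n + 4 * i + 5)) (n-1) (4*n+1) (fun i hi => quad_fix n i (4*n+1) (by omega) (by omega) (by omega) (by omega) (by omega) (by omega) (by omega) (by omega)),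
          swap_spec (4*n+1) (8*n) (4*n+1) (8*n) (by omega),
          swap_spec 3 (8*n-1) (8*n) (8*n) (by omega),
          swap_spec (4*n-2) (8*n-2) (8*n) (8*n) (by omega),
          swap_spec (4*n-3) 4 (8*n) (8*n) (by omega)]
      exact Or.inr (Or.inr (Or.inr (Or.inr (Or.inr (Or.inr (Or.inl ⟨rfl, hval⟩))))))
    by_cases h8 : x = 8*n
    · subst h8
      have hval : σ₀ (8*n) = 4*n+1 := by
        rw [hσ₀]; simp only [Equiv.Perm.mul_apply]
        rw [prod_fix (fun i => Equiv.swap (4 * i + 1) (4 * i + 8) * Equiv.swap (4 * i + 2) (4 * n + 4 * i + 2) * Equiv.swap (4 * i + 7) (4 * n + 4 * i + 3) * Equiv.swap (4 * n + 4 * i + 4) (4 * n + 4 * i + 5)) (n-1) (8*n) (fun i hi => quad_fix n i (8*n) (by omega) (by omega) (by omega) (by omega) (by omega) (by omega) (by omega) (by omega)),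
          swap_spec (4*n+1) (8*n) (8*n) (4*n+1) (by omega),
          swap_spec 3 (8*n-1) (4*n+1) (4*n+1) (by omega),
          swap_spec (4*n-2) (8*n-2) (4*n+1) (4*n+1) (by omega),
          swap_spec (4*n-3) 4 (4*n+1) (4*n+1) (by omega)]
      exact Or.inr (Or.inr (Or.inr (Or.inr (Or.inr (Or.inr (Or.inr (Or.inl ⟨rfl, hval⟩)))))))
    rcases (by omega : x % 4 = 1 ∨ x % 4 = 2 ∨ x % 4 = 3 ∨ x % 4 = 0) with hm | hm | hm | hm <;>
      by_cases hh : x ≤ 4*n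
    · obtain ⟨j, hj, rfl⟩ : ∃ j, j ≤ n-2 ∧ x = 4*j+1 := ⟨x/4, by omega, by omega⟩
      have hval : σ₀ (4*j+1) = 4*j+8 := by
        rw [hσ₀]; simp only [Equiv.Perm.mul_apply]
        rw [prod_single (fun i => Equiv.swap (4 * i + 1) (4 * i + 8) * Equiv.swap (4 * i + 2) (4 * n + 4 * i + 2) * Equiv.swap (4 * i + 7) (4 * n + 4 * i + 3) * Equiv.swap (4 * n + 4 * i + 4) (4 * n + 4 * i + 5)) (n-1) j (4*j+1) (4*j+8) (by omega)
            (fun i hi hij => quad_fix n i (4*j+1) (by omega) (by omega) (by omega) (by omega) (by omega) (by omega) (by omega) (by omega))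
            (quadA n j hn)
            (fun i hi => quad_fix n i (4*j+8) (by omega) (by omega) (by omega) (by omega) (by omega) (by omega) (by omega) (by omega)),
          swap_spec (4*n+1) (8*n) (4*j+8) (4*j+8) (by omega),
          swap_spec 3 (8*n-1) (4*j+8) (4*j+8) (by omega),
          swap_spec (4*n-2) (8*n-2) (4*j+8) (4*j+8) (by omega),
          swap_spec (4*n-3) 4 (4*j+8) (4*j+8) (by omega)]
      exact Or.inr (Or.inr (Or.inr (Or.inr (Or.inr (Or.inr (Or.inr (Or.inr (Or.inl ⟨by omega, by omega, by omega, by rw [hval]; try omega⟩))))))))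
    · obtain ⟨j, hj, rfl⟩ : ∃ j, j ≤ n-2 ∧ x = 4*n+4*j+5 := ⟨(x-4*n-5)/4, by omega, by omega⟩
      have hval : σ₀ (4*n+4*j+5) = 4*n+4*j+4 := by
        rw [hσ₀]; simp only [Equiv.Perm.mul_apply]
        rw [prod_single (fun i => Equiv.swap (4 * i + 1) (4 * i + 8) * Equiv.swap (4 * i + 2) (4 * n + 4 * i + 2) * Equiv.swap (4 * i + 7) (4 * n + 4 * i + 3) * Equiv.swap (4 * n + 4 * i + 4) (4 * n + 4 * i + 5)) (n-1) j (4*n+4*j+5) (4*n+4*j+4) (by omega)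
            (fun i hi hij => quad_fix n i (4*n+4*j+5) (by omega) (by omega) (by omega) (by omega) (by omega) (by omega) (by omega) (by omega))
            (quadH n j hn)
            (fun i hi => quad_fix n i (4*n+4*j+4) (by omega) (by omega) (by omega) (by omega) (by omega) (by omega) (by omega) (by omega)),
          swap_spec (4*n+1) (8*n) (4*n+4*j+4) (4*n+4*j+4) (by omega),
          swap_spec 3 (8*n-1) (4*n+4*j+4) (4*n+4*j+4) (by omega),
          swap_spec (4*n-2) (8*n-2) (4*n+4*j+4) (4*n+4*j+4) (by omega),
          swap_spec (4*n-3) 4 (4*n+4*j+4) (4*n+4*j+4) (by omega)]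
      exact Or.inr (Or.inr (Or.inr (Or.inr (Or.inr (Or.inr (Or.inr (Or.inr (Or.inr (Or.inr (Or.inr (Or.inr (Or.inr (Or.inr (Or.inr (Or.inl ⟨by omega, by omega, by omega, by rw [hval]; try omega⟩)))))))))))))))
    · obtain ⟨j, hj, rfl⟩ : ∃ j, j ≤ n-2 ∧ x = 4*j+2 := ⟨x/4, by omega, by omega⟩
      have hval : σ₀ (4*j+2) = 4*n+4*j+2 := by
        rw [hσ₀]; simp only [Equiv.Perm.mul_apply]
        rw [prod_single (fun i => Equiv.swap (4 * i + 1) (4 * i + 8) * Equiv.swap (4 * i + 2) (4 * n + 4 * i + 2) * Equiv.swap (4 * i + 7) (4 * n + 4 * i + 3) * Equiv.swap (4 * n + 4 * i + 4) (4 * n + 4 * i + 5)) (n-1) j (4*j+2) (4*n+4*j+2) (by omega)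
            (fun i hi hij => quad_fix n i (4*j+2) (by omega) (by omega) (by omega) (by omega) (by omega) (by omega) (by omega) (by omega))
            (quadC n j hn)
            (fun i hi => quad_fix n i (4*n+4*j+2) (by omega) (by omega) (by omega) (by omega) (by omega) (by omega) (by omega) (by omega)),
          swap_spec (4*n+1) (8*n) (4*n+4*j+2) (4*n+4*j+2) (by omega),
          swap_spec 3 (8*n-1) (4*n+4*j+2) (4*n+4*j+2) (by omega),
          swap_spec (4*n-2) (8*n-2) (4*n+4*j+2) (4*n+4*j+2) (by omega),
          swap_spec (4*n-3) 4 (4*n+4*j+2) (4*n+4*j+2) (by omega)]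
      exact Or.inr (Or.inr (Or.inr (Or.inr (Or.inr (Or.inr (Or.inr (Or.inr (Or.inr (Or.inr (Or.inl ⟨by omega, by omega, by omega, by rw [hval]; try omega⟩))))))))))
    · obtain ⟨j, hj, rfl⟩ : ∃ j, j ≤ n-2 ∧ x = 4*n+4*j+2 := ⟨(x-4*n-2)/4, by omega, by omega⟩
      have hval : σ₀ (4*n+4*j+2) = 4*j+2 := by
        rw [hσ₀]; simp only [Equiv.Perm.mul_apply]
        rw [prod_single (fun i => Equiv.swap (4 * i + 1) (4 * i + 8) * Equiv.swap (4 * i + 2) (4 * n + 4 * i + 2) * Equiv.swap (4 * i + 7) (4 * n + 4 * i + 3) * Equiv.swap (4 * n + 4 * i + 4) (4 * n + 4 * i + 5)) (n-1) j (4*n+4*j+2) (4*j+2) (by omega)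
            (fun i hi hij => quad_fix n i (4*n+4*j+2) (by omega) (by omega) (by omega) (by omega) (by omega) (by omega) (by omega) (by omega))
            (quadD n j hn)
            (fun i hi => quad_fix n i (4*j+2) (by omega) (by omega) (by omega) (by omega) (by omega) (by omega) (by omega) (by omega)),
          swap_spec (4*n+1) (8*n) (4*j+2) (4*j+2) (by omega),
          swap_spec 3 (8*n-1) (4*j+2) (4*j+2) (by omega),
          swap_spec (4*n-2) (8*n-2) (4*j+2) (4*j+2) (by omega),
          swap_spec (4*n-3) 4 (4*j+2) (4*j+2) (by omega)]
      exact Or.inr (Or.inr (Or.inr (Or.inr (Or.inr (Or.inr (Or.inr (Or.inr (Or.inr (Or.inr (Or.inr (Or.inl ⟨by omega, by omega, by omega, by rw [hval]; try omega⟩)))))))))))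
    · obtain ⟨j, hj, rfl⟩ : ∃ j, j ≤ n-2 ∧ x = 4*j+7 := ⟨(x-7)/4, by omega, by omega⟩
      have hval : σ₀ (4*j+7) = 4*n+4*j+3 := by
        rw [hσ₀]; simp only [Equiv.Perm.mul_apply]
        rw [prod_single (fun i => Equiv.swap (4 * i + 1) (4 * i + 8) * Equiv.swap (4 * i + 2) (4 * n + 4 * i + 2) * Equiv.swap (4 * i + 7) (4 * n + 4 * i + 3) * Equiv.swap (4 * n + 4 * i + 4) (4 * n + 4 * i + 5)) (n-1) j (4*j+7) (4*n+4*j+3) (by omega)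
            (fun i hi hij => quad_fix n i (4*j+7) (by omega) (by omega) (by omega) (by omega) (by omega) (by omega) (by omega) (by omega))
            (quadE n j hn)
            (fun i hi => quad_fix n i (4*n+4*j+3) (by omega) (by omega) (by omega) (by omega) (by omega) (by omega) (by omega) (by omega)),
          swap_spec (4*n+1) (8*n) (4*n+4*j+3) (4*n+4*j+3) (by omega),
          swap_spec 3 (8*n-1) (4*n+4*j+3) (4*n+4*j+3) (by omega),
          swap_spec (4*n-2) (8*n-2) (4*n+4*j+3) (4*n+4*j+3) (by omega),
          swap_spec (4*n-3) 4 (4*n+4*j+3) (4*n+4*j+3) (by omega)]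
      exact Or.inr (Or.inr (Or.inr (Or.inr (Or.inr (Or.inr (Or.inr (Or.inr (Or.inr (Or.inr (Or.inr (Or.inr (Or.inl ⟨by omega, by omega, by omega, by rw [hval]; try omega⟩))))))))))))
    · obtain ⟨j, hj, rfl⟩ : ∃ j, j ≤ n-2 ∧ x = 4*n+4*j+3 := ⟨(x-4*n-3)/4, by omega, by omega⟩
      have hval : σ₀ (4*n+4*j+3) = 4*j+7 := by
        rw [hσ₀]; simp only [Equiv.Perm.mul_apply]
        rw [prod_single (fun i => Equiv.swap (4 * i + 1) (4 * i + 8) * Equiv.swap (4 * i + 2) (4 * n + 4 * i + 2) * Equiv.swap (4 * i + 7) (4 * n + 4 * i + 3) * Equiv.swap (4 * n + 4 * i + 4) (4 * n + 4 * i + 5)) (n-1) j (4*n+4*j+3) (4*j+7) (by omega)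
            (fun i hi hij => quad_fix n i (4*n+4*j+3) (by omega) (by omega) (by omega) (by omega) (by omega) (by omega) (by omega) (by omega))
            (quadF n j hn)
            (fun i hi => quad_fix n i (4*j+7) (by omega) (by omega) (by omega) (by omega) (by omega) (by omega) (by omega) (by omega)),
          swap_spec (4*n+1) (8*n) (4*j+7) (4*j+7) (by omega),
          swap_spec 3 (8*n-1) (4*j+7) (4*j+7) (by omega),
          swap_spec (4*n-2) (8*n-2) (4*j+7) (4*j+7) (by omega),
          swap_spec (4*n-3) 4 (4*j+7) (4*j+7) (by omega)]
      exact Or.inr (Or.inr (Or.inr (Or.inr (Or.inr (Or.inr (Or.inr (Or.inr (Or.inr (Or.inr (Or.inr (Or.inr (Or.inr (Or.inl ⟨by omega, by omega, by omega, by rw [hval]; try omega⟩)))))))))))))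
    · obtain ⟨j, hj, rfl⟩ : ∃ j, j ≤ n-2 ∧ x = 4*j+8 := ⟨(x-8)/4, by omega, by omega⟩
      have hval : σ₀ (4*j+8) = 4*j+1 := by
        rw [hσ₀]; simp only [Equiv.Perm.mul_apply]
        rw [prod_single (fun i => Equiv.swap (4 * i + 1) (4 * i + 8) * Equiv.swap (4 * i + 2) (4 * n + 4 * i + 2) * Equiv.swap (4 * i + 7) (4 * n + 4 * i + 3) * Equiv.swap (4 * n + 4 * i + 4) (4 * n + 4 * i + 5)) (n-1) j (4*j+8) (4*j+1) (by omega)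
            (fun i hi hij => quad_fix n i (4*j+8) (by omega) (by omega) (by omega) (by omega) (by omega) (by omega) (by omega) (by omega))
            (quadB n j hn)
            (fun i hi => quad_fix n i (4*j+1) (by omega) (by omega) (by omega) (by omega) (by omega) (by omega) (by omega) (by omega)),
          swap_spec (4*n+1) (8*n) (4*j+1) (4*j+1) (by omega),
          swap_spec 3 (8*n-1) (4*j+1) (4*j+1) (by omega),
          swap_spec (4*n-2) (8*n-2) (4*j+1) (4*j+1) (by omega),
          swap_spec (4*n-3) 4 (4*j+1) (4*j+1) (by omega)]
      exact Or.inr (Or.inr (Or.inr (Or.inr (Or.inr (Or.inr (Or.inr (Or.inr (Or.inr (Or.inl ⟨by omega, by omega, by omega, by rw [hval]; try omega⟩)))))))))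
    · obtain ⟨j, hj, rfl⟩ : ∃ j, j ≤ n-2 ∧ x = 4*n+4*j+4 := ⟨(x-4*n-4)/4, by omega, by omega⟩
      have hval : σ₀ (4*n+4*j+4) = 4*n+4*j+5 := by
        rw [hσ₀]; simp only [Equiv.Perm.mul_apply]
        rw [prod_single (fun i => Equiv.swap (4 * i + 1) (4 * i + 8) * Equiv.swap (4 * i + 2) (4 * n + 4 * i + 2) * Equiv.swap (4 * i + 7) (4 * n + 4 * i + 3) * Equiv.swap (4 * n + 4 * i + 4) (4 * n + 4 * i + 5)) (n-1) j (4*n+4*j+4) (4*n+4*j+5) (by omega)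
            (fun i hi hij => quad_fix n i (4*n+4*j+4) (by omega) (by omega) (by omega) (by omega) (by omega) (by omega) (by omega) (by omega))
            (quadG n j hn)
            (fun i hi => quad_fix n i (4*n+4*j+5) (by omega) (by omega) (by omega) (by omega) (by omega) (by omega) (by omega) (by omega)),
          swap_spec (4*n+1) (8*n) (4*n+4*j+5) (4*n+4*j+5) (by omega),
          swap_spec 3 (8*n-1) (4*n+4*j+5) (4*n+4*j+5) (by omega),
          swap_spec (4*n-2) (8*n-2) (4*n+4*j+5) (4*n+4*j+5) (by omega),
          swap_spec (4*n-3) 4 (4*n+4*j+5) (4*n+4*j+5) (by omega)]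
      exact Or.inr (Or.inr (Or.inr (Or.inr (Or.inr (Or.inr (Or.inr (Or.inr (Or.inr (Or.inr (Or.inr (Or.inr (Or.inr (Or.inr (Or.inl ⟨by omega, by omega, by omega, by rw [hval]; try omega⟩))))))))))))))
  have hmem0 : σ₀ ∈ Subgroup.closure ({σ₀, σ₁} : Set (Equiv.Perm ℕ)) :=
    Subgroup.subset_closure (by simp)
  have hmem1 : σ₁ ∈ Subgroup.closure ({σ₀, σ₁} : Set (Equiv.Perm ℕ)) :=
    Subgroup.subset_closure (by simp)
  have key : ∀ N x : ℕ, x ≤ N → 1 ≤ x → x ≤ 8*n →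
      ∃ g ∈ Subgroup.closure ({σ₀, σ₁} : Set (Equiv.Perm ℕ)), g x = 1 := by
    intro N
    induction N with
    | zero => intro x h0 h1 _; omega
    | succ N ih =>
      intro x hxN hx1 hx2
      by_cases hq0 : x ≤ 4
      · have e2 : σ₁ 2 = 3 := by have := hs1 2; omega
        have e3 : σ₁ 3 = 4 := by have := hs1 3; omega
        have e4 : σ₁ 4 = 1 := by have := hs1 4; omega
        rcases (by omega : x = 1 ∨ x = 2 ∨ x = 3 ∨ x = 4) with rfl | rfl | rfl | rfl
        · exact ⟨1, one_mem _, rfl⟩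
        · exact ⟨σ₁*σ₁*σ₁, mul_mem (mul_mem hmem1 hmem1) hmem1, by
            simp only [Equiv.Perm.mul_apply]; rw [e2, e3, e4]⟩
        · exact ⟨σ₁*σ₁, mul_mem hmem1 hmem1, by
            simp only [Equiv.Perm.mul_apply]; rw [e3, e4]⟩
        · exact ⟨σ₁, hmem1, e4⟩
      · by_cases hh : x ≤ 4*n
        · obtain ⟨q, hq1, hq2, hc⟩ : ∃ q, 1 ≤ q ∧ q ≤ n-1 ∧
              (x = 4*q+1 ∨ x = 4*q+2 ∨ x = 4*q+3 ∨ x = 4*q+4) :=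
            ⟨(x-1)/4, by omega, by omega, by omega⟩
          have eA : σ₁ (4*q+1) = 4*q+2 := by have := hs1 (4*q+1); omega
          have eB : σ₁ (4*q+2) = 4*q+3 := by have := hs1 (4*q+2); omega
          have eC : σ₁ (4*q+3) = 4*q+4 := by have := hs1 (4*q+3); omega
          have hpiv : σ₀ (4*q+4) = 4*q-3 := by have := hs0 (4*q+4); omega
          obtain ⟨g, hg, hg1⟩ := ih (4*q-3) (by omega) (by omega) (by omega)
          rcases hc with rfl | rfl | rfl | rfl
          · exact ⟨g * (σ₀*σ₁*σ₁*σ₁),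
              mul_mem hg (mul_mem (mul_mem (mul_mem hmem0 hmem1) hmem1) hmem1), by
              simp only [Equiv.Perm.mul_apply]; rw [eA, eB, eC, hpiv, hg1]⟩
          · exact ⟨g * (σ₀*σ₁*σ₁), mul_mem hg (mul_mem (mul_mem hmem0 hmem1) hmem1), by
              simp only [Equiv.Perm.mul_apply]; rw [eB, eC, hpiv, hg1]⟩
          · exact ⟨g * (σ₀*σ₁), mul_mem hg (mul_mem hmem0 hmem1), by
              simp only [Equiv.Perm.mul_apply]; rw [eC, hpiv, hg1]⟩
          · exact ⟨g * σ₀, mul_mem hg hmem0, by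
              simp only [Equiv.Perm.mul_apply]; rw [hpiv, hg1]⟩
        · obtain ⟨q, hq1, hq2, hc⟩ : ∃ q, n ≤ q ∧ q ≤ 2*n-1 ∧
              (x = 4*q+1 ∨ x = 4*q+2 ∨ x = 4*q+3 ∨ x = 4*q+4) :=
            ⟨(x-1)/4, by omega, by omega, by omega⟩
          have eA : σ₁ (4*q+1) = 4*q+2 := by have := hs1 (4*q+1); omega
          have eC : σ₁ (4*q+3) = 4*q+4 := by have := hs1 (4*q+3); omega
          have eD : σ₁ (4*q+4) = 4*q+1 := by have := hs1 (4*q+4); omega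
          have hpiv : σ₀ (4*q+2) = 4*q+2-4*n := by have := hs0 (4*q+2); omega
          obtain ⟨g, hg, hg1⟩ := ih (4*q+2-4*n) (by omega) (by omega) (by omega)
          rcases hc with rfl | rfl | rfl | rfl
          · exact ⟨g * (σ₀*σ₁), mul_mem hg (mul_mem hmem0 hmem1), by
              simp only [Equiv.Perm.mul_apply]; rw [eA, hpiv, hg1]⟩
          · exact ⟨g * σ₀, mul_mem hg hmem0, by
              simp only [Equiv.Perm.mul_apply]; rw [hpiv, hg1]⟩
          · exact ⟨g * (σ₀*σ₁*σ₁*σ₁),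
              mul_mem hg (mul_mem (mul_mem (mul_mem hmem0 hmem1) hmem1) hmem1), by
              simp only [Equiv.Perm.mul_apply]; rw [eC, eD, eA, hpiv, hg1]⟩
          · exact ⟨g * (σ₀*σ₁*σ₁), mul_mem hg (mul_mem (mul_mem hmem0 hmem1) hmem1), by
              simp only [Equiv.Perm.mul_apply]; rw [eD, eA, hpiv, hg1]⟩
  refine ⟨?_, ?_, ?_, ?_⟩
  · apply Equiv.ext; intro z
    simp only [Equiv.Perm.mul_apply, Equiv.Perm.one_apply]
    have h1 := hs0 z; have h2 := hs0 (σ₀ z)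
    omega
  · intro x hx
    rw [Finset.mem_Icc] at hx
    have := hs0 x
    omega
  · have hp4 : σ₁^4 = σ₁*σ₁*σ₁*σ₁ := by rw [pow_succ, pow_succ, pow_succ, pow_one]
    apply Equiv.ext; intro z
    rw [hp4]
    simp only [Equiv.Perm.mul_apply, Equiv.Perm.one_apply]
    have k1 := hs1 z; have k2 := hs1 (σ₁ z); have k3 := hs1 (σ₁ (σ₁ z))
    have k4 := hs1 (σ₁ (σ₁ (σ₁ z)))
    omega
  · intro a ha b hb
    rw [Finset.mem_Icc] at ha hb
    obtain ⟨g, hg, hga⟩ := key a a le_rfl ha.1 ha.2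
    obtain ⟨g', hg', hgb⟩ := key b b le_rfl hb.1 hb.2
    exact ⟨g'⁻¹ * g, mul_mem (inv_mem hg') hg, by
      rw [Equiv.Perm.mul_apply, hga, ← hgb, ← Equiv.Perm.mul_apply, inv_mul_cancel, Equiv.Perm.one_apply]⟩
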